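/- For n ≡ 2 or 3 (mod 4) and any 0 ≤ k ≤ n-1, the number of even permutations of [n] with k descents equals the number of odd permutations of [n] with n-1-k descents. -/

import Mathlib

open Finset

/-- number of descents of a permutation of `Fin n` (one-line notation). -/
def desA {n : ℕ} (π : Equiv.Perm (Fin n)) : ℕ :=
  (Finset.univ.filter (fun i : Fin (n-1) =>
    π ⟨i.1+1, by have := i.2; omega⟩ < π ⟨i.1, by have := i.2; omega⟩)).card

/-- number of ascents. -/
def ascA {n : ℕ} (π : Equiv.Perm (Fin n)) : ℕ :=
  (Finset.univ.filter (fun i : Fin (n-1) =>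
    π ⟨i.1, by have := i.2; omega⟩ < π ⟨i.1+1, by have := i.2; omega⟩)).card

/-- number of inversions. -/
def invA {n : ℕ} (π : Equiv.Perm (Fin n)) : ℕ :=
  (Finset.univ.filter (fun p : Fin n × Fin n => p.1 < p.2 ∧ π p.2 < π p.1)).card

/-- bivariate Eulerian polynomial over all of `S_n`; variable 0 is `s`, variable 1 is `t`. -/
noncomputable def Abiv (n : ℕ) : MvPolynomial (Fin 2) ℚ :=
  ∑ π : Equiv.Perm (Fin n), MvPolynomial.X 1 ^ desA π * MvPolynomial.X 0 ^ ascA π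

noncomputable def AbivP (n : ℕ) : MvPolynomial (Fin 2) ℚ :=
  ∑ π ∈ Finset.univ.filter (fun π : Equiv.Perm (Fin n) => Equiv.Perm.sign π = 1),
    MvPolynomial.X 1 ^ desA π * MvPolynomial.X 0 ^ ascA π

noncomputable def AbivM (n : ℕ) : MvPolynomial (Fin 2) ℚ :=
  ∑ π ∈ Finset.univ.filter (fun π : Equiv.Perm (Fin n) => Equiv.Perm.sign π = -1),
    MvPolynomial.X 1 ^ desA π * MvPolynomial.X 0 ^ ascA π

noncomputable def Auni (n : ℕ) : Polynomial ℚ :=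
  ∑ π : Equiv.Perm (Fin n), Polynomial.X ^ desA π

noncomputable def AuniP (n : ℕ) : Polynomial ℚ :=
  ∑ π ∈ Finset.univ.filter (fun π : Equiv.Perm (Fin n) => Equiv.Perm.sign π = 1),
    Polynomial.X ^ desA π

noncomputable def AuniM (n : ℕ) : Polynomial ℚ :=
  ∑ π ∈ Finset.univ.filter (fun π : Equiv.Perm (Fin n) => Equiv.Perm.sign π = -1),
    Polynomial.X ^ desA π

/-- the operator `∂/∂s + ∂/∂t`. -/
noncomputable def Dop (f : MvPolynomial (Fin 2) ℚ) : MvPolynomial (Fin 2) ℚ :=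
  MvPolynomial.pderiv 0 f + MvPolynomial.pderiv 1 f

/-- A univariate polynomial is palindromic: with `r` the least exponent with nonzero
coefficient and `n` the degree, `a_{r+i} = a_{n-i}`. -/
def Palind (f : Polynomial ℚ) : Prop :=
  ∀ i ≤ f.natDegree - f.natTrailingDegree,
    f.coeff (f.natTrailingDegree + i) = f.coeff (f.natDegree - i)

/-- bivariate gamma positivity with center of symmetry `N/2`. -/
def BivGamma (f : MvPolynomial (Fin 2) ℚ) (N : ℕ) : Prop :=
  ∃ γ : ℕ → ℕ, (∀ i, γ i ≠ 0 → 2*i ≤ N) ∧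
    f = ∑ i ∈ Finset.range (N+1), (γ i : MvPolynomial (Fin 2) ℚ) *
      ((MvPolynomial.X 0 * MvPolynomial.X 1)^i * (MvPolynomial.X 0 + MvPolynomial.X 1)^(N - 2*i))

/-- univariate gamma positivity with center of symmetry `c2/2`. -/
def UniGamma (f : Polynomial ℚ) (c2 : ℕ) : Prop :=
  ∃ γ : ℕ → ℕ, (∀ i, γ i ≠ 0 → 2*i ≤ c2) ∧
    f = ∑ i ∈ Finset.range (c2+1), (γ i : ℚ) •
      (Polynomial.X^i * (1 + Polynomial.X)^(c2 - 2*i))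

/-- signed permutations: a permutation together with a sign for each position. -/
abbrev SignedPerm (n : ℕ) := Equiv.Perm (Fin n) × (Fin n → Bool)

/-- the one-line word of a signed permutation, 1-indexed, with `bw w 0 = 0`;
entry `i` is `±(w.1 i + 1)` viewed in `{-n,…,-1,1,…,n}`. -/
def bw {n : ℕ} (w : SignedPerm n) (i : ℕ) : ℤ :=
  if h : 1 ≤ i ∧ i ≤ n then
    (if w.2 ⟨i-1, by omega⟩ then -(((w.1 ⟨i-1, by omega⟩ : ℕ) : ℤ) + 1)
     else ((w.1 ⟨i-1, by omega⟩ : ℕ) : ℤ) + 1)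
  else 0

/-- type-B descents (including a possible descent at position 0). -/
def desB {n : ℕ} (w : SignedPerm n) : ℕ :=
  ((Finset.range n).filter (fun i => bw w (i+1) < bw w i)).card

/-- type-B inversions (length). -/
def invB {n : ℕ} (w : SignedPerm n) : ℕ :=
  (Finset.univ.filter (fun p : Fin n × Fin n => p.1 < p.2 ∧ bw w (p.2.1+1) < bw w (p.1.1+1))).card
  + (Finset.univ.filter (fun p : Fin n × Fin n => p.1 < p.2 ∧ bw w (p.2.1+1) < -(bw w (p.1.1+1)))).card
  + (Finset.univ.filter (fun i : Fin n => bw w (i.1+1) < 0)).card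

/-- type-D inversions. -/
def invD {n : ℕ} (w : SignedPerm n) : ℕ :=
  (Finset.univ.filter (fun p : Fin n × Fin n => p.1 < p.2 ∧ bw w (p.2.1+1) < bw w (p.1.1+1))).card
  + (Finset.univ.filter (fun p : Fin n × Fin n => p.1 < p.2 ∧ bw w (p.2.1+1) < -(bw w (p.1.1+1)))).card

noncomputable def Bbiv (n : ℕ) : MvPolynomial (Fin 2) ℚ :=
  ∑ w : SignedPerm n, MvPolynomial.X 1 ^ desB w * MvPolynomial.X 0 ^ (n - desB w)

noncomputable def BbivP (n : ℕ) : MvPolynomial (Fin 2) ℚ :=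
  ∑ w ∈ Finset.univ.filter (fun w : SignedPerm n => Even (invB w)),
    MvPolynomial.X 1 ^ desB w * MvPolynomial.X 0 ^ (n - desB w)

noncomputable def BbivM (n : ℕ) : MvPolynomial (Fin 2) ℚ :=
  ∑ w ∈ Finset.univ.filter (fun w : SignedPerm n => ¬ Even (invB w)),
    MvPolynomial.X 1 ^ desB w * MvPolynomial.X 0 ^ (n - desB w)

noncomputable def BuniP (n : ℕ) : Polynomial ℚ :=
  ∑ w ∈ Finset.univ.filter (fun w : SignedPerm n => Even (invB w)), Polynomial.X ^ desB w

noncomputable def BuniM (n : ℕ) : Polynomial ℚ :=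
  ∑ w ∈ Finset.univ.filter (fun w : SignedPerm n => ¬ Even (invB w)), Polynomial.X ^ desB w

/-- deleting the largest letter from the one-line notation of `π ∈ S_{n+1}`
gives a permutation of `[n]`. -/
noncomputable def restrictMax {n : ℕ} (π : Equiv.Perm (Fin (n+1))) : Equiv.Perm (Fin n) :=
  Equiv.ofBijective
    (fun i => Fin.castPred (π ((π.symm (Fin.last n)).succAbove i))
      (by
        intro h
        have h2 : (π.symm (Fin.last n)).succAbove i = π.symm (Fin.last n) := by
          apply π.injective
          rw [h, Equiv.apply_symm_apply]
        exact Fin.succAbove_ne _ i h2))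
    (Finite.injective_iff_bijective.mp (by
      intro i j h
      have h2 : π ((π.symm (Fin.last n)).succAbove i) = π ((π.symm (Fin.last n)).succAbove j) :=
        Fin.castPred_inj.mp h
      have h3 := π.injective h2
      exact Fin.succAbove_right_injective h3))

/-- number of even permutations of `[n]` with `k` descents (`k : ℤ`). -/
noncomputable def aP (n : ℕ) (k : ℤ) : ℕ :=
  (Finset.univ.filter (fun π : Equiv.Perm (Fin n) =>
    Equiv.Perm.sign π = 1 ∧ (desA π : ℤ) = k)).card

/-- number of odd permutations of `[n]` with `k` descents. -/
noncomputable def aM (n : ℕ) (k : ℤ) : ℕ :=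
  (Finset.univ.filter (fun π : Equiv.Perm (Fin n) =>
    Equiv.Perm.sign π = -1 ∧ (desA π : ℤ) = k)).card

private def swf (n : ℕ) (i : ℕ) : Equiv.Perm (Fin n) :=
  if h : i < n/2 then Equiv.swap ⟨i, by omega⟩ ⟨n-1-i, by omega⟩ else 1

private lemma prod_fix {α : Type*} [DecidableEq α] [Fintype α]
    (l : List (Equiv.Perm α)) (x : α) (h : ∀ g ∈ l, g x = x) : l.prod x = x := by
  induction l with
  | nil => simp
  | cons g t ih =>
    simp only [List.prod_cons, Equiv.Perm.mul_apply]
    rw [ih fun g' hg' => h g' (List.mem_cons_of_mem _ hg'), h g List.mem_cons_self]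

private lemma swf_pairwise (n : ℕ) :
    ((List.range (n/2)).map (swf n)).Pairwise Equiv.Perm.Disjoint := by
  rw [List.pairwise_map]
  refine List.pairwise_lt_range.imp ?_
  intro i j hij
  have hj : j < n/2 ∨ ¬ (j < n/2) := em _
  intro x
  by_cases hjn : j < n/2
  · have hin : i < n/2 := by omega
    simp only [swf, dif_pos hjn, dif_pos hin]
    by_cases hx : x.1 = i ∨ x.1 = n-1-i
    · right
      apply Equiv.swap_apply_of_ne_of_ne <;>
        · intro hc; apply_fun Fin.val at hc; simp at hc; omega
    · left
      apply Equiv.swap_apply_of_ne_of_ne <;>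
        · intro hc; apply_fun Fin.val at hc; simp at hc; omega
  · simp [swf, dif_neg hjn]

private lemma rev_eq_prod (n : ℕ) :
    (Fin.revPerm : Equiv.Perm (Fin n)) = ((List.range (n/2)).map (swf n)).prod := by
  ext x
  have hx : x.1 < n := x.2
  rcases lt_or_ge x.1 (n/2) with h1 | h1
  · have hm : swf n x.1 ∈ (List.range (n/2)).map (swf n) :=
      List.mem_map_of_mem (List.mem_range.mpr h1)
    have hs : x ∈ (swf n x.1).support := by
      simp only [swf, dif_pos h1, Equiv.Perm.mem_support]
      rw [show (⟨x.1, by omega⟩ : Fin n) = x from rfl, Equiv.swap_apply_left]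
      intro hc; apply_fun Fin.val at hc; simp at hc; omega
    have := Equiv.Perm.eq_on_support_mem_disjoint hm (swf_pairwise n) x hs
    rw [← this]
    simp only [swf, dif_pos h1]
    rw [show (⟨x.1, by omega⟩ : Fin n) = x from rfl, Equiv.swap_apply_left]
    simp only [Fin.revPerm_apply, Fin.rev, Fin.mk.injEq]; omega
  · rcases lt_or_ge (n-1-x.1) (n/2) with h2 | h2
    · set i := n-1-x.1 with hi
      have hm : swf n i ∈ (List.range (n/2)).map (swf n) :=
        List.mem_map_of_mem (List.mem_range.mpr h2)
      have hxe : x = (⟨n-1-i, by omega⟩ : Fin n) := by ext; simp; omega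
      have hs : x ∈ (swf n i).support := by
        simp only [swf, dif_pos h2, Equiv.Perm.mem_support]
        rw [hxe, Equiv.swap_apply_right]
        intro hc; apply_fun Fin.val at hc; simp at hc; omega
      have := Equiv.Perm.eq_on_support_mem_disjoint hm (swf_pairwise n) x hs
      rw [← this]
      simp only [swf, dif_pos h2]
      rw [hxe, Equiv.swap_apply_right]
      simp only [Fin.revPerm_apply, Fin.rev, Fin.mk.injEq]; omega
    · have hfix : ∀ g ∈ (List.range (n/2)).map (swf n), g x = x := by
        intro g hg
        rcases List.mem_map.mp hg with ⟨i, hi, rfl⟩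
        have hi' := List.mem_range.mp hi
        simp only [swf, dif_pos hi']
        apply Equiv.swap_apply_of_ne_of_ne <;>
          · intro hc; apply_fun Fin.val at hc; simp at hc; omega
      rw [prod_fix _ _ hfix]
      simp only [Fin.revPerm_apply, Fin.rev, Fin.mk.injEq]; omega

lemma sign_revPerm' (n : ℕ) :
    Equiv.Perm.sign (Fin.revPerm : Equiv.Perm (Fin n)) = (-1)^(n/2) := by
  rw [rev_eq_prod n, Equiv.Perm.sign_prod_list_swap, List.length_map, List.length_range]
  intro g hg
  rcases List.mem_map.mp hg with ⟨i, hi, rfl⟩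
  have hi' := List.mem_range.mp hi
  refine ⟨⟨i, by omega⟩, ⟨n-1-i, by omega⟩, ?_, by simp [swf, dif_pos hi']⟩
  intro hc; apply_fun Fin.val at hc; simp at hc; omega

lemma desA_mul_rev' {n : ℕ} (π : Equiv.Perm (Fin n)) :
    desA (π * Fin.revPerm) = ascA π := by
  unfold desA ascA
  apply Finset.card_nbij' (fun i => i.rev) (fun i => i.rev)
  · intro i hi
    have h2 := i.2
    simp only [Finset.mem_coe, Finset.mem_filter, Finset.mem_univ, true_and, Equiv.Perm.mul_apply,
      Fin.revPerm_apply] at hi ⊢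
    convert hi using 2 <;> · simp [Fin.ext_iff, Fin.rev]; omega
  · intro a ha
    have h2 := a.2
    simp only [Finset.mem_coe, Finset.mem_filter, Finset.mem_univ, true_and, Equiv.Perm.mul_apply,
      Fin.revPerm_apply] at ha ⊢
    convert ha using 2 <;> · simp [Fin.ext_iff, Fin.rev]; omega
  · intro a _; exact Fin.rev_rev a
  · intro a _; exact Fin.rev_rev a

lemma asc_add_des' {n : ℕ} (π : Equiv.Perm (Fin n)) : ascA π + desA π = n - 1 := by
  classical
  unfold ascA desA
  have h := Finset.card_filter_add_card_filter_not
    (s := (Finset.univ : Finset (Fin (n-1))))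
    (p := fun i : Fin (n-1) =>
      π ⟨i.1, by have := i.2; omega⟩ < π ⟨i.1+1, by have := i.2; omega⟩)
  rw [Finset.card_univ, Fintype.card_fin] at h
  conv_rhs => rw [← h]
  congr 1
  apply congrArg
  apply Finset.filter_congr
  intro i _
  have hne : π ⟨i.1+1, by have := i.2; omega⟩ ≠ π ⟨i.1, by have := i.2; omega⟩ := by
    intro hc
    have := π.injective hc
    apply_fun Fin.val at this
    simp at this
  simp only [not_lt]
  exact ⟨le_of_lt, fun h' => h'.lt_of_ne hne⟩

theorem even_des_k_eq_odd_des_compl (n k : ℕ) (hn : n % 4 = 2 ∨ n % 4 = 3)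
    (hk : k ≤ n - 1) :
    (Finset.univ.filter (fun π : Equiv.Perm (Fin n) =>
      Equiv.Perm.sign π = 1 ∧ desA π = k)).card =
    (Finset.univ.filter (fun π : Equiv.Perm (Fin n) =>
      Equiv.Perm.sign π = -1 ∧ desA π = n - 1 - k)).card := by
  have hn2 : 2 ≤ n := by omega
  have hsign : Equiv.Perm.sign (Fin.revPerm : Equiv.Perm (Fin n)) = -1 := by
    rw [sign_revPerm']
    exact Odd.neg_one_pow (Nat.odd_iff.mpr (by omega))
  have hrev2 : (Fin.revPerm : Equiv.Perm (Fin n)) * Fin.revPerm = 1 :=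
    Equiv.ext fun x => Fin.rev_rev x
  apply Finset.card_nbij' (fun π => π * Fin.revPerm) (fun σ => σ * Fin.revPerm)
  · intro π hπ
    simp only [Finset.mem_coe, Finset.mem_filter, Finset.mem_univ, true_and] at hπ ⊢
    have hd := desA_mul_rev' π
    have ha := asc_add_des' π
    refine ⟨?_, by omega⟩
    rw [Equiv.Perm.sign_mul, hπ.1, hsign, one_mul]
  · intro σ hσ
    simp only [Finset.mem_coe, Finset.mem_filter, Finset.mem_univ, true_and] at hσ ⊢
    have hd := desA_mul_rev' σ
    have ha := asc_add_des' σ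
    refine ⟨?_, by omega⟩
    rw [Equiv.Perm.sign_mul, hσ.1, hsign]
    decide
  · intro a _; dsimp only; rw [mul_assoc, hrev2, mul_one]
  · intro a _; dsimp only; rw [mul_assoc, hrev2, mul_one]
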